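/- Let G be an m-uniform hypergraph on n vertices with Laplacian eigenvalues 0 = λ₁ ≤ λ₂ ≤ … ≤ λ_n, and let Ḡ be its complement (same vertex set, edge set equal to all m-subsets not in E). Then the Laplacian eigenvalues of Ḡ are 0 together with φ_m(n) − λ_n ≤ … ≤ φ_m(n) − λ₂, where φ_m(n) = (n/(n−1))·C(n−1, m−1). -/

import Mathlib

open Finset

/-- The hypergraph Laplacian as an operator on real-valued vertex functions:
`(L_G f)(v) = ∑_{e ∋ v} (1/(|e|-1)) ∑_{u ∈ e} (f v - f u)`. -/
noncomputable def lapOp {V : Type} [Fintype V] [DecidableEq V] (E : Finset (Finset V)) (f : V → ℝ) : V → ℝ :=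
  fun v => ∑ e ∈ E.filter (fun e => v ∈ e), (1 / ((e.card : ℝ) - 1)) * ∑ u ∈ e, (f v - f u)

/-- The matrix of the hypergraph Laplacian. -/
noncomputable def lapMatrix {V : Type} [Fintype V] [DecidableEq V] (E : Finset (Finset V)) : Matrix V V ℝ :=
  Matrix.of fun v w => ∑ e ∈ E.filter (fun e => v ∈ e),
    (1 / ((e.card : ℝ) - 1)) * ((if w = v then (e.card : ℝ) else 0) - (if w ∈ e then 1 else 0))

/-- Edge set obtained from `E` by adding a `k`-dominating set `S = Fin k` of fresh vertices:
the new edges are `S ∪ {u}` for every old vertex `u`. -/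
def domEdges {V : Type} [Fintype V] [DecidableEq V] (E : Finset (Finset V)) (k : ℕ) :
    Finset (Finset (V ⊕ Fin k)) :=
  E.image (Finset.image Sum.inl) ∪
    (Finset.univ : Finset V).image
      (fun u => insert (Sum.inl u) ((Finset.univ : Finset (Fin k)).image Sum.inr))

open Polynomial Matrix

section Aux

variable {V : Type} [Fintype V] [DecidableEq V]

lemma lap_mulVec_one (E : Finset (Finset V)) :
    lapMatrix E *ᵥ (fun _ => (1:ℝ)) = 0 := by
  funext v
  simp only [mulVec, dotProduct, lapMatrix, Matrix.of_apply, mul_one]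
  rw [Finset.sum_comm]
  refine Finset.sum_eq_zero fun e he => ?_
  rw [← Finset.mul_sum]
  have : ∑ w : V, ((if w = v then (e.card : ℝ) else 0) - (if w ∈ e then 1 else 0)) = 0 := by
    rw [Finset.sum_sub_distrib]
    simp [Finset.sum_ite_eq' (Finset.univ : Finset V) v (fun _ => (e.card : ℝ))]
  rw [this, mul_zero]

lemma lap_isHermitian (E : Finset (Finset V)) : (lapMatrix E).IsHermitian := by
  rw [Matrix.IsHermitian, conjTranspose_eq_transpose_of_trivial]
  funext v w
  simp only [transpose_apply, lapMatrix, Matrix.of_apply]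
  rw [Finset.sum_filter, Finset.sum_filter]
  refine Finset.sum_congr rfl fun e he => ?_
  by_cases hvw : v = w
  · subst hvw; rfl
  · have hwv : ¬ w = v := fun h => hvw h.symm
    by_cases hv : v ∈ e <;> by_cases hw : w ∈ e <;>
      simp [hv, hw, hvw, hwv]

lemma lap_sdiff {E F : Finset (Finset V)} (hEF : E ⊆ F) :
    lapMatrix (F \ E) = lapMatrix F - lapMatrix E := by
  funext v w
  simp only [lapMatrix, Matrix.of_apply, Matrix.sub_apply]
  have hfil : (F \ E).filter (fun e => v ∈ e) = F.filter (fun e => v ∈ e) \ E.filter (fun e => v ∈ e) := by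
    ext e; simp only [Finset.mem_filter, Finset.mem_sdiff]; tauto
  rw [hfil, Finset.sum_sdiff_eq_sub (Finset.filter_subset_filter _ hEF)]

lemma eval_charpoly (M : Matrix V V ℝ) (x : ℝ) :
    M.charpoly.eval x = (x • (1 : Matrix V V ℝ) - M).det := by
  rw [Matrix.charpoly, ← Polynomial.coe_evalRingHom, RingHom.map_det]
  congr 1
  funext i j
  by_cases h : i = j <;>
    simp [h, charmatrix_apply, Matrix.one_apply, Matrix.diagonal_apply, Matrix.sub_apply]

lemma card_filter_subset_powersetCard (t : Finset V) (m : ℕ) (ht : t.card ≤ m) :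
    ((Finset.univ.powersetCard m).filter (fun e => t ⊆ e)).card
      = (Fintype.card V - t.card).choose (m - t.card) := by
  have : ((Finset.univ.powersetCard m).filter (fun e => t ⊆ e)).card
      = ((Finset.univ \ t).powersetCard (m - t.card)).card := by
    refine Finset.card_bij' (fun e _ => e \ t) (fun s _ => s ∪ t) ?_ ?_ ?_ ?_
    · intro e he
      simp only [Finset.mem_filter, Finset.mem_powersetCard_univ] at he
      rw [Finset.mem_powersetCard]
      exact ⟨Finset.sdiff_subset_sdiff (Finset.subset_univ e) le_rfl,
        by rw [Finset.card_sdiff_of_subset he.2, he.1]⟩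
    · intro s hs
      rw [Finset.mem_powersetCard] at hs
      have hdisj : Disjoint s t := Finset.disjoint_of_subset_left hs.1 (Finset.sdiff_disjoint)
      simp only [Finset.mem_filter, Finset.mem_powersetCard_univ]
      constructor
      · rw [Finset.card_union_of_disjoint hdisj, hs.2]
        omega
      · exact Finset.subset_union_right
    · intro e he
      simp only [Finset.mem_filter] at he
      exact Finset.sdiff_union_of_subset he.2
    · intro s hs
      rw [Finset.mem_powersetCard] at hs
      have hdisj : Disjoint s t := Finset.disjoint_of_subset_left hs.1 (Finset.sdiff_disjoint)
      show (s ∪ t) \ t = s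
      rw [Finset.union_sdiff_distrib, Finset.sdiff_self, Finset.union_empty,
        Finset.sdiff_eq_self_of_disjoint hdisj]
  rw [this, Finset.card_powersetCard]
  congr 1
  rw [Finset.card_sdiff_of_subset (Finset.subset_univ t), Finset.card_univ]

lemma lap_complete (mu : ℕ) (hmu : 2 ≤ mu) :
    lapMatrix ((Finset.univ : Finset V).powersetCard mu) =
      ((Fintype.card V : ℝ) / ((Fintype.card V : ℝ) - 1) * ((Fintype.card V - 1).choose (mu - 1) : ℝ)) • (1 : Matrix V V ℝ)
        - (((Fintype.card V : ℝ) / ((Fintype.card V : ℝ) - 1) * ((Fintype.card V - 1).choose (mu - 1) : ℝ)) / (Fintype.card V : ℝ))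
            • (Matrix.of fun _ _ => (1:ℝ)) := by
  set n := Fintype.card V with hn
  set d : ℕ := (n - 1).choose (mu - 1) with hd
  set c : ℝ := (n : ℝ) / ((n : ℝ) - 1) * (d : ℝ) with hc
  funext v w
  have hn1 : 1 ≤ n := Fintype.card_pos_iff.mpr ⟨v⟩
  simp only [lapMatrix, Matrix.of_apply, Matrix.sub_apply, Matrix.smul_apply, Matrix.one_apply,
    smul_eq_mul]
  by_cases hvw : w = v
  · subst hvw
    have hsum : ∑ e ∈ (Finset.univ.powersetCard mu).filter (fun e => w ∈ e),
        (1 / ((e.card : ℝ) - 1)) * ((if w = w then (e.card : ℝ) else 0) - (if w ∈ e then 1 else 0))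
        = ∑ e ∈ (Finset.univ.powersetCard mu).filter (fun e => w ∈ e), (1:ℝ) := by
      refine Finset.sum_congr rfl fun e he => ?_
      simp only [Finset.mem_filter, Finset.mem_powersetCard_univ] at he
      have hcard : e.card = mu := he.1
      have hmu1 : (mu : ℝ) - 1 ≠ 0 := by
        have : (2:ℝ) ≤ mu := by exact_mod_cast hmu
        linarith
      simp only [if_pos rfl, if_pos he.2, hcard, ↓reduceIte]
      field_simp
    rw [hsum, Finset.sum_const, nsmul_eq_mul, mul_one]
    have hfil : (Finset.univ.powersetCard mu).filter (fun e => w ∈ e)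
        = (Finset.univ.powersetCard mu).filter (fun e => ({w} : Finset V) ⊆ e) := by
      refine Finset.filter_congr fun e _ => ?_
      simp [Finset.singleton_subset_iff]
    have hcnt : ((Finset.univ.powersetCard mu).filter (fun e => w ∈ e)).card = d := by
      rw [hfil, card_filter_subset_powersetCard _ mu (by rw [Finset.card_singleton]; omega)]
      simp [hd, hn]
    rw [hcnt, if_pos rfl]
    rcases Nat.lt_or_ge n 2 with h2 | h2
    · have hn1' : n = 1 := by omega
      have hd0 : d = 0 := by
        rw [hd, hn1']
        exact Nat.choose_eq_zero_of_lt (by omega)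
      rw [hc, hd0, hn1']
      norm_num
    · have hne : (n : ℝ) - 1 ≠ 0 := by
        have : (2:ℝ) ≤ n := by exact_mod_cast h2
        linarith
      have hne' : (n : ℝ) ≠ 0 := by positivity
      rw [hc]
      field_simp
  · have hne2 : 2 ≤ n := by
      have : Nontrivial V := ⟨⟨w, v, hvw⟩⟩
      exact Fintype.one_lt_card
    have hmu1 : (mu : ℝ) - 1 ≠ 0 := by
      have : (2:ℝ) ≤ mu := by exact_mod_cast hmu
      linarith
    have hsum : ∑ e ∈ (Finset.univ.powersetCard mu).filter (fun e => v ∈ e),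
        (1 / ((e.card : ℝ) - 1)) * ((if w = v then (e.card : ℝ) else 0) - (if w ∈ e then 1 else 0))
        = ∑ e ∈ (Finset.univ.powersetCard mu).filter (fun e => v ∈ e),
            (-(1 / ((mu : ℝ) - 1))) * (if w ∈ e then (1:ℝ) else 0) := by
      refine Finset.sum_congr rfl fun e he => ?_
      simp only [Finset.mem_filter, Finset.mem_powersetCard_univ] at he
      rw [if_neg hvw, he.1]
      ring
    rw [hsum, ← Finset.mul_sum, Finset.sum_boole, Finset.filter_filter]
    have hfil : (Finset.univ.powersetCard mu).filter (fun e => v ∈ e ∧ w ∈ e)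
        = (Finset.univ.powersetCard mu).filter (fun e => ({v, w} : Finset V) ⊆ e) := by
      refine Finset.filter_congr fun e _ => ?_
      simp [Finset.insert_subset_iff, Finset.singleton_subset_iff]
    have hcard2 : ({v, w} : Finset V).card = 2 := by
      rw [Finset.card_insert_of_notMem (by simp [Ne.symm hvw]), Finset.card_singleton]
    have hcnt : ((Finset.univ.powersetCard mu).filter (fun e => v ∈ e ∧ w ∈ e)).card
        = (n - 2).choose (mu - 2) := by
      rw [hfil, card_filter_subset_powersetCard _ mu (by rw [hcard2]; omega), hcard2]
    rw [hcnt, if_neg (fun h => hvw h.symm)]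
    have hkey : ((n : ℝ) - 1) * ((n - 2).choose (mu - 2) : ℝ) = ((mu : ℝ) - 1) * (d : ℝ) := by
      have := Nat.add_one_mul_choose_eq (n - 2) (mu - 2)
      have h1 : n - 2 + 1 = n - 1 := by omega
      have h2 : mu - 2 + 1 = mu - 1 := by omega
      rw [h1, h2] at this
      have hcast : ((n-1 : ℕ) : ℝ) * ((n - 2).choose (mu - 2) : ℝ) = ((n-1).choose (mu-1) : ℝ) * ((mu-1 : ℕ) : ℝ) := by
        exact_mod_cast congrArg (Nat.cast : ℕ → ℝ) this
      have hn1c : ((n-1 : ℕ) : ℝ) = (n : ℝ) - 1 := by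
        push_cast [Nat.cast_sub (by omega : 1 ≤ n)]; ring
      have hmu1c : ((mu-1 : ℕ) : ℝ) = (mu : ℝ) - 1 := by
        push_cast [Nat.cast_sub (by omega : 1 ≤ mu)]; ring
      rw [hn1c, hmu1c] at hcast
      rw [hcast, hd]; ring
    have hne : (n : ℝ) - 1 ≠ 0 := by
      have : (2:ℝ) ≤ n := by exact_mod_cast hne2
      linarith
    have hne' : (n : ℝ) ≠ 0 := by positivity
    rw [hc]
    field_simp
    nlinarith [hkey]

lemma det_sub_smul_J (A : Matrix V V ℝ) (hA : A *ᵥ (fun _ => (1:ℝ)) = 0)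
    (y t : ℝ) (hy : y ≠ 0) (hdet : (y • (1 : Matrix V V ℝ) - A).det ≠ 0) :
    (y • (1 : Matrix V V ℝ) - A - t • (Matrix.of fun _ _ => (1:ℝ))).det
      = (y • (1 : Matrix V V ℝ) - A).det * (1 - t * (Fintype.card V : ℝ) / y) := by
  set M := y • (1 : Matrix V V ℝ) - A with hM
  have hMone : M *ᵥ (fun _ => (1:ℝ)) = y • (fun _ => (1:ℝ)) := by
    rw [hM, Matrix.sub_mulVec, hA, sub_zero, Matrix.smul_mulVec, Matrix.one_mulVec]
  have hMinv : M⁻¹ *ᵥ (fun _ => (1:ℝ)) = y⁻¹ • (fun _ => (1:ℝ)) := by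
    have h1 : M⁻¹ *ᵥ (y • (fun _ => (1:ℝ))) = (fun _ => (1:ℝ)) := by
      rw [← hMone, Matrix.mulVec_mulVec, Matrix.nonsing_inv_mul M (isUnit_iff_ne_zero.mpr hdet),
        Matrix.one_mulVec]
    rw [Matrix.mulVec_smul] at h1
    calc M⁻¹ *ᵥ (fun _ => (1:ℝ)) = y⁻¹ • (y • (M⁻¹ *ᵥ (fun _ => (1:ℝ)))) := by
          rw [smul_smul, inv_mul_cancel₀ hy, one_smul]
      _ = y⁻¹ • (fun _ => (1:ℝ)) := by rw [h1]
  have hrowsum : ∀ a : V, ∑ b : V, M⁻¹ a b = y⁻¹ := by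
    intro a
    have := congrFun hMinv a
    simpa [Matrix.mulVec, dotProduct] using this
  have hJ : M - t • (Matrix.of fun _ _ => (1:ℝ))
      = M + Matrix.replicateCol Unit (fun _ => -t) * Matrix.replicateRow Unit (fun _ => (1:ℝ)) := by
    funext i j
    simp [Matrix.mul_apply, Matrix.replicateCol, Matrix.replicateRow, sub_eq_add_neg]
  rw [hJ, Matrix.det_add_replicateCol_mul_replicateRow (isUnit_iff_ne_zero.mpr hdet)]
  congr 1
  rw [Matrix.det_unique]
  have : ((1 + Matrix.replicateRow Unit (fun _ : V => (1:ℝ)) * M⁻¹ * Matrix.replicateCol Unit (fun _ : V => -t) :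
      Matrix Unit Unit ℝ)) default default = 1 - t * (Fintype.card V : ℝ) / y := by
    simp only [Matrix.add_apply, Matrix.one_apply_eq, Matrix.mul_apply, Matrix.replicateRow_apply,
      Matrix.replicateCol_apply, one_mul]
    have : ∑ j : V, (∑ i : V, M⁻¹ i j) * (-t) = -t * ((Fintype.card V : ℝ) * y⁻¹) := by
      rw [← Finset.sum_mul, Finset.sum_comm]
      simp only [hrowsum]
      rw [Finset.sum_const, Finset.card_univ, nsmul_eq_mul]
      ring
    rw [this]
    field_simp
    ring
  rw [this]

lemma herm_charpoly_factor {A : Matrix V V ℝ} (hA : A.IsHermitian) :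
    A.charpoly = (A.charpoly.roots.map (fun a => X - C a)).prod
      ∧ Multiset.card A.charpoly.roots = Fintype.card V := by
  set U : Matrix V V ℝ := (hA.eigenvectorUnitary : Matrix V V ℝ) with hU
  have hUU : U * star U = 1 := Matrix.mem_unitaryGroup_iff.mp hA.eigenvectorUnitary.2
  set D : Matrix V V ℝ := Matrix.diagonal (RCLike.ofReal ∘ hA.eigenvalues) with hD
  have hspec : A = U * D * star U := hA.spectral_theorem
  have hdiag : A.charpoly = D.charpoly := by
    apply Polynomial.eq_of_infinite_eval_eq
    have : {x : ℝ | A.charpoly.eval x = D.charpoly.eval x} = Set.univ := by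
      ext x
      simp only [Set.mem_setOf_eq, Set.mem_univ, iff_true]
      rw [_root_.eval_charpoly, _root_.eval_charpoly]
      have h1 : x • (1 : Matrix V V ℝ) - A = U * (x • (1 : Matrix V V ℝ) - D) * star U := by
        rw [Matrix.mul_sub, Matrix.sub_mul, hspec]
        congr 1
        rw [Matrix.mul_smul, Matrix.smul_mul, Matrix.mul_one, hUU]
      rw [h1, Matrix.det_mul, Matrix.det_mul, mul_comm (U.det) _, mul_assoc, ← Matrix.det_mul, hUU]
      simp
    rw [this]
    exact Set.infinite_univ
  have hDval : D.charpoly = ((Finset.univ.val.map hA.eigenvalues).map (fun a => X - C a)).prod := by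
    rw [Matrix.charpoly]
    have hcm : charmatrix D = Matrix.diagonal (fun i => (X : ℝ[X]) - C (hA.eigenvalues i)) := by
      funext i j
      by_cases h : i = j
      · subst h
        simp [hD, Matrix.diagonal_apply_eq]
      · simp [charmatrix_apply, Matrix.diagonal_apply_ne _ h, hD]
    rw [hcm, Matrix.det_diagonal]
    rw [Finset.prod_eq_multiset_prod, Multiset.map_map]
    rfl
  have hroots : A.charpoly.roots = Finset.univ.val.map hA.eigenvalues := by
    rw [hdiag, hDval, Polynomial.roots_multiset_prod_X_sub_C]
  constructor
  · rw [hroots, ← hDval, ← hdiag]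
  · rw [hroots]
    simp [Finset.card_univ]

lemma eval_prod_XsubC (s : Multiset ℝ) (z : ℝ) :
    ((s.map (fun a => X - C a)).prod).eval z = (s.map (fun a => z - a)).prod := by
  rw [Polynomial.eval_multiset_prod, Multiset.map_map]
  congr 1
  apply Multiset.map_congr rfl
  intro a _
  simp

end Aux

/-- Spectrum of the complement of an `m`-uniform hypergraph on `n` vertices: the nonzero
eigenvalues become `φ_m(n) - λ` with `φ_m(n) = (n/(n-1))·C(n-1, m-1)`. -/
theorem stmt_13 {V : Type} [Fintype V] [DecidableEq V] [Nonempty V]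
    (mu : ℕ) (hmu : 2 ≤ mu) (E : Finset (Finset V)) (hE : ∀ e ∈ E, e.card = mu)
    (μ : Multiset ℝ) (h : (lapMatrix E).charpoly.roots = (0 : ℝ) ::ₘ μ) :
    (lapMatrix ((Finset.univ.powersetCard mu) \ E)).charpoly.roots =
      (0 : ℝ) ::ₘ μ.map (fun l =>
        (Fintype.card V : ℝ) / ((Fintype.card V : ℝ) - 1) *
          ((Fintype.card V - 1).choose (mu - 1) : ℝ) - l) := by
  classical
  set n := Fintype.card V with hn
  set c : ℝ := (n : ℝ) / ((n : ℝ) - 1) * ((n - 1).choose (mu - 1) : ℝ) with hc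
  have hn0 : (n : ℝ) ≠ 0 := Nat.cast_ne_zero.mpr Fintype.card_ne_zero
  set A := lapMatrix E with hA
  set B := lapMatrix ((Finset.univ.powersetCard mu) \ E) with hB
  have hEK : E ⊆ Finset.univ.powersetCard mu := fun e he =>
    Finset.mem_powersetCard_univ.mpr (hE e he)
  have hBeq : B = c • (1 : Matrix V V ℝ) - (c / (n : ℝ)) • (Matrix.of fun _ _ => (1:ℝ)) - A := by
    rw [hB, hA, lap_sdiff hEK, lap_complete mu hmu]
  obtain ⟨hAfact, hAcard⟩ := herm_charpoly_factor (lap_isHermitian E)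
  obtain ⟨hBfact, hBcard⟩ := herm_charpoly_factor (lap_isHermitian ((Finset.univ.powersetCard mu) \ E))
  rw [h] at hAfact hAcard
  have hμcard : Multiset.card μ = n - 1 := by
    rw [Multiset.card_cons] at hAcard
    omega
  set ρ := B.charpoly.roots with hρ
  suffices hpoly : (ρ.map (fun a => X - C a)).prod
      = (((0:ℝ) ::ₘ μ.map (fun l => c - l)).map (fun a => X - C a)).prod by
    have := congrArg Polynomial.roots hpoly
    rwa [Polynomial.roots_multiset_prod_X_sub_C, Polynomial.roots_multiset_prod_X_sub_C] at this
  apply Polynomial.eq_of_infinite_eval_eq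
  have hTfin : {x : ℝ | A.charpoly.eval (c - x) = 0}.Finite := by
    have hsub : {x : ℝ | A.charpoly.eval (c - x) = 0}
        ⊆ (fun x : ℝ => c - x) ⁻¹' (A.charpoly.roots.toFinset : Set ℝ) := by
      intro x hx
      simp only [Set.mem_preimage, Multiset.mem_toFinset, Finset.mem_coe]
      exact (Polynomial.mem_roots A.charpoly_monic.ne_zero).mpr hx
    refine Set.Finite.subset (Set.Finite.preimage ?_ (Finset.finite_toSet _)) hsub
    have hinj : Function.Injective (fun x : ℝ => c - x) := by
      intro a b hab
      simp only [sub_right_inj] at hab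
      exact hab
    exact hinj.injOn
  refine Set.Infinite.mono ?_ (hTfin.infinite_compl)
  intro x hx
  simp only [Set.mem_compl_iff, Set.mem_setOf_eq] at hx
  simp only [Set.mem_setOf_eq]
  set y := c - x with hy
  have hevalA : A.charpoly.eval y = y * (μ.map (fun l => y - l)).prod := by
    rw [hAfact, eval_prod_XsubC, Multiset.map_cons, Multiset.prod_cons, sub_zero]
  have hy0 : y ≠ 0 := by
    intro h0
    apply hx
    rw [hevalA, h0, zero_mul]
  have hdetA : ((y • (1 : Matrix V V ℝ) - A).det) ≠ 0 := by
    rw [← _root_.eval_charpoly]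
    exact hx
  have hLHS : ((ρ.map (fun a => X - C a)).prod).eval x
      = ((-1:ℝ))^n * ((y • (1 : Matrix V V ℝ) - A
          - (c / (n:ℝ)) • (Matrix.of fun _ _ => (1:ℝ))).det) := by
    rw [← hBfact, _root_.eval_charpoly]
    have hxB : x • (1 : Matrix V V ℝ) - B
        = -(y • (1 : Matrix V V ℝ) - A - (c / (n:ℝ)) • (Matrix.of fun _ _ => (1:ℝ))) := by
      rw [hBeq, hy]
      funext i j
      simp only [Matrix.sub_apply, Matrix.smul_apply, Matrix.neg_apply, Matrix.one_apply,
        Matrix.of_apply, smul_eq_mul]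
      by_cases hij : i = j <;> simp [hij] <;> ring
    rw [hxB, Matrix.det_neg, ← hn]
  rw [hLHS, det_sub_smul_J A (lap_mulVec_one E) y _ hy0 hdetA, ← _root_.eval_charpoly, hevalA]
  rw [eval_prod_XsubC, Multiset.map_cons, Multiset.prod_cons, sub_zero]
  set P := ((μ.map (fun l => c - l)).map (fun a => x - a)).prod with hP
  have hmapneg : (μ.map (fun l => y - l)).prod = ((-1:ℝ))^(n-1) * P := by
    have h1 : μ.map (fun l => y - l)
        = (μ.map (fun l => c - l)).map (fun a => (-1) * (x - a)) := by
      rw [Multiset.map_map]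
      apply Multiset.map_congr rfl
      intro l _
      simp only [Function.comp_apply]
      rw [hy]; ring
    rw [h1]
    have h2 : (μ.map (fun l => c - l)).map (fun a => (-1:ℝ) * (x - a))
        = Multiset.map (fun a => ((fun _ : ℝ => (-1:ℝ)) a) * ((fun a => x - a) a))
            (μ.map (fun l => c - l)) := rfl
    rw [h2, Multiset.prod_map_mul]
    congr 1
    rw [Multiset.map_const', Multiset.prod_replicate, Multiset.card_map, hμcard]
  rw [hmapneg]
  have hn1 : 1 ≤ n := Fintype.card_pos
  have hsign : ((-1:ℝ))^n * ((-1:ℝ))^(n-1) = -1 := by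
    rw [← pow_add]
    have h1 : n + (n-1) = 2*(n-1)+1 := by omega
    rw [h1, pow_succ, pow_mul]
    norm_num
  have hyinv : y * y⁻¹ = 1 := mul_inv_cancel₀ hy0
  have hninv : (n:ℝ) * ((n:ℝ))⁻¹ = 1 := mul_inv_cancel₀ hn0
  rw [← hn]
  clear_value P y c n
  linear_combination (P*y - P*y*c*(n:ℝ)*((n:ℝ))⁻¹*y⁻¹) * hsign
    + (P*y*c*y⁻¹) * hninv
    + (P*c) * hyinv - P * hy
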